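/- Let q ≥ 1, let {A_s}_{s∈S} be a finite family of real q×q matrices, and let F := (1/2)·∑_{s∈S} A_s ⊗ A_s, where ⊗ denotes the Kronecker product; assume F is invertible. Let δ := vec(W) for some symmetric q×q real matrix W, and set I := F·N_q. Then for every real q²×q² matrix P satisfying the four Penrose conditions for I (namely I·P·I = I, P·I·P = P, and both I·P and P·I are symmetric), one has P·δ = F⁻¹·δ. In particular, the Fisher Scoring update step computed with the Moore–Penrose pseudoinverse of I = F·N_q applied to δ coincides with the update step F⁻¹·δ. -/

import Mathlib

open Matrix

/-- Column-major vectorization of a matrix. -/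
def vec {α β R : Type*} (A : Matrix α β R) : β × α → R := fun p => A p.2 p.1

/-- The commutation matrix `K_{q,q}`: the unique `q² × q²` matrix with
`K_{q,q} · vec A = vec Aᵀ` for every `q × q` matrix `A` (column-major `vec`). -/
def commMat (q : ℕ) : Matrix (Fin q × Fin q) (Fin q × Fin q) ℝ := fun a b =>
  if a.1 = b.2 ∧ a.2 = b.1 then 1 else 0

/-- The symmetrization matrix `N_q = (1/2)(I_{q²} + K_{q,q})`. -/
noncomputable def Nmat (q : ℕ) : Matrix (Fin q × Fin q) (Fin q × Fin q) ℝ :=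
  (1 / 2 : ℝ) • (1 + commMat q)

lemma commMat_mul_apply {q : ℕ} (M : Matrix (Fin q × Fin q) (Fin q × Fin q) ℝ)
    (a b : Fin q × Fin q) : (commMat q * M) a b = M (a.2, a.1) b := by
  simp only [Matrix.mul_apply, commMat]
  rw [Finset.sum_eq_single (a.2, a.1)]
  · simp
  · intro c _ hc
    rw [if_neg, zero_mul]
    rintro ⟨h1, h2⟩
    exact hc (by ext <;> simp [← h1, ← h2])
  · simp

lemma mul_commMat_apply {q : ℕ} (M : Matrix (Fin q × Fin q) (Fin q × Fin q) ℝ)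
    (a b : Fin q × Fin q) : (M * commMat q) a b = M a (b.2, b.1) := by
  simp only [Matrix.mul_apply, commMat]
  rw [Finset.sum_eq_single (b.2, b.1)]
  · simp
  · intro c _ hc
    rw [if_neg, mul_zero]
    rintro ⟨h1, h2⟩
    exact hc (by ext <;> simp [h1, h2])
  · simp

lemma commMat_mulVec' {q : ℕ} (v : Fin q × Fin q → ℝ) :
    (commMat q).mulVec v = fun p => v (p.2, p.1) := by
  funext p
  simp only [Matrix.mulVec, dotProduct, commMat]
  rw [Finset.sum_eq_single (p.2, p.1)]
  · simp
  · intro c _ hc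
    rw [if_neg, zero_mul]
    rintro ⟨h1, h2⟩
    exact hc (by ext <;> simp [← h1, ← h2])
  · simp

lemma commMat_symm (q : ℕ) : (commMat q)ᵀ = commMat q := by
  ext a b
  simp [commMat, Matrix.transpose_apply, and_comm, eq_comm]

lemma commMat_kron {q : ℕ} (A : Matrix (Fin q) (Fin q) ℝ) :
    commMat q * kroneckerMap (· * ·) A A = kroneckerMap (· * ·) A A * commMat q := by
  ext a b
  rw [commMat_mul_apply, mul_commMat_apply]
  simp [kroneckerMap, mul_comm]


/-- For `F = (1/2) ∑_s A_s ⊗ A_s` invertible, `δ = vec W` with `W` symmetric,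
and `I = F · N_q`, any matrix `P` satisfying the four Penrose conditions for `I` (i.e. the
Moore–Penrose pseudoinverse of `I`) satisfies `P δ = F⁻¹ δ`. -/
theorem stmt9 (q : ℕ) (hq : 1 ≤ q) {S : Type*} [Fintype S]
    (A : S → Matrix (Fin q) (Fin q) ℝ)
    (F : Matrix (Fin q × Fin q) (Fin q × Fin q) ℝ)
    (hF : F = (1 / 2 : ℝ) • ∑ s, kroneckerMap (· * ·) (A s) (A s))
    (hFinv : IsUnit F.det)
    (W : Matrix (Fin q) (Fin q) ℝ) (hW : W.IsSymm)
    (δ : (Fin q × Fin q) → ℝ) (hδ : δ = _root_.vec W)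
    (I' : Matrix (Fin q × Fin q) (Fin q × Fin q) ℝ) (hI : I' = F * Nmat q)
    (P : Matrix (Fin q × Fin q) (Fin q × Fin q) ℝ)
    (hP1 : I' * P * I' = I') (hP2 : P * I' * P = P)
    (hP3 : (I' * P).IsSymm) (hP4 : (P * I').IsSymm) :
    P.mulVec δ = F⁻¹.mulVec δ := by
  have hK : commMat q * F = F * commMat q := by
    rw [hF, Matrix.mul_smul, Matrix.smul_mul, Matrix.mul_sum, Matrix.sum_mul]
    congr 1
    exact Finset.sum_congr rfl fun s _ => commMat_kron (A s)
  have hN : Nmat q * F = F * Nmat q := by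
    simp only [Nmat, Matrix.smul_mul, Matrix.mul_smul, add_mul, mul_add, one_mul, mul_one, hK]
  have hFl : F⁻¹ * F = 1 := Matrix.nonsing_inv_mul F hFinv
  have hFr : F * F⁻¹ = 1 := Matrix.mul_nonsing_inv F hFinv
  have hNinv : F⁻¹ * Nmat q = Nmat q * F⁻¹ := by
    calc F⁻¹ * Nmat q = F⁻¹ * Nmat q * (F * F⁻¹) := by rw [hFr, mul_one]
    _ = F⁻¹ * (Nmat q * F) * F⁻¹ := by simp only [Matrix.mul_assoc]
    _ = F⁻¹ * (F * Nmat q) * F⁻¹ := by rw [hN]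
    _ = (F⁻¹ * F) * (Nmat q * F⁻¹) := by simp only [Matrix.mul_assoc]
    _ = Nmat q * F⁻¹ := by rw [hFl, one_mul]
  have hKδ : (commMat q).mulVec δ = δ := by
    rw [commMat_mulVec', hδ]
    funext p
    have := congrFun (congrFun hW p.1) p.2
    simpa [_root_.vec, Matrix.transpose_apply] using this.symm
  have hNδ : (Nmat q).mulVec δ = δ := by
    rw [Nmat, Matrix.smul_mulVec, Matrix.add_mulVec, Matrix.one_mulVec, hKδ]
    funext p
    simp
    ring
  set x := F⁻¹.mulVec δ with hx
  have hNx : (Nmat q).mulVec x = x := by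
    rw [hx, Matrix.mulVec_mulVec, ← hNinv, ← Matrix.mulVec_mulVec, hNδ]
  have hIx : I'.mulVec x = δ := by
    rw [hI, ← Matrix.mulVec_mulVec, hNx, hx, Matrix.mulVec_mulVec, hFr, Matrix.one_mulVec]
  set z := (F⁻¹)ᵀ.mulVec x with hz
  have hNt : (Nmat q)ᵀ = Nmat q := by
    simp [Nmat, Matrix.transpose_smul, Matrix.transpose_add, commMat_symm]
  have hIt : I'ᵀ.mulVec z = x := by
    rw [hI, Matrix.transpose_mul, hNt, hz, ← Matrix.mulVec_mulVec,
      Matrix.mulVec_mulVec, Matrix.mulVec_mulVec, Matrix.mul_assoc,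
      ← Matrix.transpose_mul, hFl, Matrix.transpose_one, mul_one, hNx]
  have hQI : (P * I') * I'ᵀ = I'ᵀ := by
    have h4 : (P * I')ᵀ = P * I' := hP4
    calc (P * I') * I'ᵀ = (P * I')ᵀ * I'ᵀ := by rw [h4]
    _ = (I' * (P * I'))ᵀ := (Matrix.transpose_mul I' (P * I')).symm
    _ = (I' * P * I')ᵀ := by rw [Matrix.mul_assoc]
    _ = I'ᵀ := by rw [hP1]
  calc P.mulVec δ = P.mulVec (I'.mulVec x) := by rw [hIx]
  _ = (P * I').mulVec x := by rw [Matrix.mulVec_mulVec]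
  _ = (P * I').mulVec (I'ᵀ.mulVec z) := by rw [hIt]
  _ = ((P * I') * I'ᵀ).mulVec z := by rw [Matrix.mulVec_mulVec]
  _ = I'ᵀ.mulVec z := by rw [hQI]
  _ = x := hIt
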